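/- Let A : (ℂ,0) → (ℂ^N,0) be a nonconstant holomorphic (convergent power series) mapping with A(0) = 0. Then there exists a formal power series f ∈ ℂ⟦s⟧ with f(0) = 0 such that at least one component of the formal composition A∘f is a non-convergent formal power series. -/

import Mathlib

noncomputable section

/-- Formal substitution: `substPS F g = g ∘ F`, well-defined (agreeing with the usual
substitution) when each `F j` has zero constant term. -/
noncomputable def substPS {σ τ : Type*} [Fintype σ] [DecidableEq σ]
    (F : σ → MvPowerSeries τ ℂ) (g : MvPowerSeries σ ℂ) : MvPowerSeries τ ℂ :=
  fun d =>
    MvPowerSeries.coeff d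
      ((MvPolynomial.aeval F)
        (MvPowerSeries.trunc ℂ
          (Finsupp.equivFunOnFinite.symm fun _ => (d.sum fun _ v => v) + 1) g))

/-- Formal partial derivative of a multivariate formal power series. -/
noncomputable def pderivPS {σ : Type*} (i : σ) (f : MvPowerSeries σ ℂ) : MvPowerSeries σ ℂ :=
  fun d => ((d i : ℂ) + 1) * MvPowerSeries.coeff (d + Finsupp.single i 1) f

/-- Setting the second group of variables equal to `0` in a formal power series. -/
noncomputable def setSnd0 {A B : Type*} (f : MvPowerSeries (A ⊕ B) ℂ) : MvPowerSeries A ℂ :=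
  fun d => MvPowerSeries.coeff (Finsupp.mapDomain Sum.inl d) f

/-- A formal power series is convergent iff its coefficients grow at most geometrically. -/
def IsConvergentPS {σ : Type*} (f : MvPowerSeries σ ℂ) : Prop :=
  ∃ C r : ℝ, 0 < r ∧ ∀ d : σ →₀ ℕ, ‖MvPowerSeries.coeff d f‖ ≤ C * r ^ (d.sum fun _ v => v)

end

noncomputable section StmtTwelveAux

open PowerSeries

namespace Stmt12Aux

lemma coeff_pow_zero_of_lt (f : PowerSeries ℂ) (hf : constantCoeff f = 0) :
    ∀ t : ℕ, ∀ i : ℕ, i < t → coeff i (f ^ t) = 0 := by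
  intro t
  induction t with
  | zero => intro i hi; omega
  | succ t ih =>
      intro i hi
      rw [pow_succ, coeff_mul]
      apply Finset.sum_eq_zero
      rintro ⟨a, b⟩ hab
      rw [Finset.HasAntidiagonal.mem_antidiagonal] at hab
      rcases Nat.eq_zero_or_pos b with hb | hb
      · subst hb
        simp only [coeff_zero_eq_constantCoeff, hf, mul_zero]
      · rw [ih a (by omega), zero_mul]

lemma coeff_pow_self (f : PowerSeries ℂ) (hf : constantCoeff f = 0) :
    ∀ t : ℕ, coeff t (f ^ t) = (coeff 1 f) ^ t := by
  intro t
  induction t with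
  | zero => simp
  | succ t ih =>
      rw [pow_succ, coeff_mul]
      rw [Finset.sum_eq_single (t, 1)]
      · rw [ih, pow_succ]
      · rintro ⟨a, b⟩ hab hne
        rw [Finset.HasAntidiagonal.mem_antidiagonal] at hab
        simp only at hab
        rcases Nat.eq_zero_or_pos b with hb | hb
        · subst hb; simp only [coeff_zero_eq_constantCoeff, hf, mul_zero]
        · have hb2 : 2 ≤ b := by
            rcases eq_or_lt_of_le (Nat.succ_le_of_lt hb) with h1 | h1
            · exfalso; apply hne; rw [← h1] at hab ⊢
              have : a = t := by omega
              simp [this, ← h1]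
            · omega
          rw [coeff_pow_zero_of_lt f hf t a (by omega), zero_mul]
      · intro h
        exact absurd (Finset.HasAntidiagonal.mem_antidiagonal.2 (by omega)) h

lemma coeff_pow_congr (f f' : PowerSeries ℂ)
    (hf : constantCoeff f = 0) (hf' : constantCoeff f' = 0) (M : ℕ)
    (h : ∀ i ≤ M, coeff i f = coeff i f') :
    ∀ k D : ℕ, D + 1 ≤ M + k → coeff D (f ^ k) = coeff D (f' ^ k) := by
  intro k
  induction k with
  | zero => intro D hD; rfl
  | succ k ih =>
      intro D hD
      rw [pow_succ, pow_succ, coeff_mul, coeff_mul]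
      apply Finset.sum_congr rfl
      rintro ⟨a, b⟩ hab
      rw [Finset.HasAntidiagonal.mem_antidiagonal] at hab
      simp only at hab ⊢
      rcases Nat.eq_zero_or_pos b with hb | hb
      · subst hb
        simp only [coeff_zero_eq_constantCoeff, hf, hf', mul_zero]
      · by_cases hbM : b ≤ M
        · rw [h b hbM, ih a (by omega)]
        · rw [coeff_pow_zero_of_lt f hf k a (by omega),
            coeff_pow_zero_of_lt f' hf' k a (by omega), zero_mul, zero_mul]

lemma finsupp_sum_unit (d : Unit →₀ ℕ) : (d.sum fun _ v => v) = d () := by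
  rw [Finsupp.sum_fintype]
  · exact Fintype.sum_unique _
  · intro; rfl

lemma substPS_coeff (f g : PowerSeries ℂ) (d : Unit →₀ ℕ) :
    MvPowerSeries.coeff d (substPS (fun _ : Unit => f) g) =
      ∑ k ∈ Finset.range (d () + 1),
        PowerSeries.coeff k g * PowerSeries.coeff (d ()) (f ^ k) := by
  classical
  have hcoeff : ∀ (φ : PowerSeries ℂ) (e : Unit →₀ ℕ),
      MvPowerSeries.coeff e φ = PowerSeries.coeff (e ()) φ := by
    intro φ e
    rw [PowerSeries.coeff]
    conv_lhs => rw [Finsupp.unique_single e]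
  have hsub : MvPowerSeries.coeff d (substPS (fun _ : Unit => f) g) =
      MvPowerSeries.coeff d ((MvPolynomial.aeval fun _ : Unit => f)
        (MvPowerSeries.trunc ℂ
          (Finsupp.equivFunOnFinite.symm fun _ => (d.sum fun _ v => v) + 1) g)) := by
    rw [MvPowerSeries.coeff_apply, MvPowerSeries.coeff_apply]; rfl
  rw [hsub, hcoeff]
  have hd : (d.sum fun _ v => v) = d () := finsupp_sum_unit d
  rw [hd]
  have htr : MvPowerSeries.trunc ℂ
      (Finsupp.equivFunOnFinite.symm fun _ : Unit => d () + 1) g =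
      ∑ m ∈ Finset.Iio (Finsupp.equivFunOnFinite.symm fun _ : Unit => d () + 1),
        MvPolynomial.monomial m (MvPowerSeries.coeff m g) := rfl
  rw [htr, map_sum (MvPolynomial.aeval fun _ : Unit => f) _ _,
    map_sum (PowerSeries.coeff (d ())) _ _]
  have hmem : ∀ m : Unit →₀ ℕ,
      m ∈ Finset.Iio (Finsupp.equivFunOnFinite.symm fun _ : Unit => d () + 1) ↔
        m () < d () + 1 := by
    intro m
    rw [Finset.mem_Iio]
    constructor
    · intro h
      rcases lt_iff_le_and_ne.1 h with ⟨hle, hne⟩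
      have h1 : m () ≤ d () + 1 := by
        simpa using (Finsupp.le_def.1 hle) ()
      rcases lt_or_eq_of_le h1 with h2 | h2
      · exact h2
      · exfalso
        apply hne
        ext i
        simpa using h2
    · intro h
      apply lt_iff_le_and_ne.2
      constructor
      · rw [Finsupp.le_def]
        intro i
        simpa using le_of_lt h
      · intro hc
        rw [hc] at h
        simp at h
  refine Finset.sum_bij' (i := fun m _ => m ()) (j := fun k _ => Finsupp.single () k)
    ?_ ?_ ?_ ?_ ?_
  · intro m hm
    rw [Finset.mem_range]
    exact (hmem m).1 hm
  · intro k hk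
    rw [Finset.mem_range] at hk
    rw [hmem]
    simpa using hk
  · intro m hm
    exact (Finsupp.unique_single m).symm
  · intro k hk
    simp
  · intro m hm
    rw [MvPolynomial.aeval_monomial]
    rw [hcoeff g m]
    have hpr : (m.prod fun _ e => f ^ e) = f ^ (m ()) := by
      conv_lhs => rw [Finsupp.unique_single m]
      exact Finsupp.prod_single_index (by simp)
    rw [hpr, ← Algebra.smul_def, map_smul, smul_eq_mul]

lemma coeff_perturb (g : PowerSeries ℂ) (hg : constantCoeff g = 0) (c : ℂ)
    (m p k : ℕ) (hp : 2 ≤ p) (hm : 1 ≤ m) (hk1 : 1 ≤ k) (hkm : m ≤ k) :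
    coeff (m + p - 1) ((g + PowerSeries.C c * X ^ p) ^ k) =
      coeff (m + p - 1) (g ^ k) + (k : ℂ) * c * coeff (m - 1) (g ^ (k - 1)) := by
  rw [add_pow, map_sum]
  have hsplit : k + 1 = (k - 1) + 1 + 1 := by omega
  rw [hsplit, Finset.sum_range_succ, Finset.sum_range_succ]
  have hterm_k : coeff (m + p - 1)
      (g ^ (k - 1 + 1) * (C c * X ^ p) ^ (k - (k - 1 + 1)) * (k.choose (k - 1 + 1) : ℂ⟦X⟧)) =
      coeff (m + p - 1) (g ^ k) := by
    have h1 : k - 1 + 1 = k := by omega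
    rw [h1, Nat.sub_self, pow_zero, mul_one, Nat.choose_self, Nat.cast_one, mul_one]
  have hterm_k1 : coeff (m + p - 1)
      (g ^ (k - 1) * (C c * X ^ p) ^ (k - (k - 1)) * (k.choose (k - 1) : ℂ⟦X⟧)) =
      (k : ℂ) * c * coeff (m - 1) (g ^ (k - 1)) := by
    have h1 : k - (k - 1) = 1 := by omega
    have hch : k.choose (k - 1) = k := by
      rw [Nat.choose_symm hk1, Nat.choose_one_right]
    rw [h1, pow_one, hch]
    have h2 : g ^ (k - 1) * (C c * X ^ p) * (k : ℂ⟦X⟧) =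
        C c * ((k : ℂ⟦X⟧) * (g ^ (k - 1) * X ^ p)) := by ring
    have h3 : (k : ℂ⟦X⟧) = C (k : ℂ) := by
      rw [map_natCast]
    rw [h2, h3, coeff_C_mul, coeff_C_mul, coeff_mul_X_pow']
    rw [if_pos (by omega : p ≤ m + p - 1)]
    have h4 : m + p - 1 - p = m - 1 := by omega
    rw [h4]; ring
  have hrest : ∀ j ∈ Finset.range (k - 1), coeff (m + p - 1)
      (g ^ j * (C c * X ^ p) ^ (k - j) * (k.choose j : ℂ⟦X⟧)) = 0 := by
    intro j hj
    rw [Finset.mem_range] at hj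
    have htkj : 2 ≤ k - j := by omega
    have hre : g ^ j * (C c * X ^ p) ^ (k - j) * (k.choose j : ℂ⟦X⟧) =
        C (c ^ (k - j)) * ((k.choose j : ℂ⟦X⟧) * (g ^ j * X ^ (p * (k - j)))) := by
      rw [mul_pow, ← pow_mul, ← map_pow]
      ring
    have h3 : ((k.choose j : ℕ) : ℂ⟦X⟧) = C ((k.choose j : ℕ) : ℂ) := by rw [map_natCast]
    rw [hre, h3, coeff_C_mul, coeff_C_mul, coeff_mul_X_pow']
    have hbig : m + p - 1 < j + p * (k - j) := by
      have h7 : p + (k - j) ≤ p * (k - j) := Nat.add_le_mul hp htkj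
      omega
    split_ifs with hle
    · rw [coeff_pow_zero_of_lt g hg j (m + p - 1 - p * (k - j)) (by omega)]
      ring
    · ring
  rw [Finset.sum_eq_zero hrest, hterm_k, hterm_k1, zero_add]; ring

/-- The key affine formula for a coefficient of the substitution. -/
lemma key (h g : PowerSeries ℂ) (m p : ℕ) (hm : 1 ≤ m) (hp : 2 ≤ p)
    (hmin : ∀ i < m, coeff i h = 0)
    (hg0 : constantCoeff g = 0) (hg1 : coeff 1 g = 1) (c : ℂ) :
    MvPowerSeries.coeff (Finsupp.single () (m + p - 1))
        (substPS (fun _ : Unit => g + C c * X ^ p) h) =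
      MvPowerSeries.coeff (Finsupp.single () (m + p - 1))
        (substPS (fun _ : Unit => g) h) + (m : ℂ) * coeff m h * c := by
  rw [substPS_coeff, substPS_coeff]
  simp only [Finsupp.single_eq_same]
  have hsum : ∑ k ∈ Finset.range (m + p - 1 + 1),
      coeff k h * coeff (m + p - 1) ((g + C c * X ^ p) ^ k) =
      ∑ k ∈ Finset.range (m + p - 1 + 1),
        (coeff k h * coeff (m + p - 1) (g ^ k) +
          if k = m then (m : ℂ) * coeff m h * c else 0) := by
    apply Finset.sum_congr rfl
    intro k hk
    by_cases hkm : k < m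
    · rw [hmin k hkm, zero_mul, zero_mul, zero_add, if_neg (by omega)]
    · push_neg at hkm
      rw [coeff_perturb g hg0 c m p k hp hm (by omega) hkm]
      by_cases hkm2 : k = m
      · subst hkm2
        rw [if_pos rfl]
        rw [coeff_pow_self g hg0 (k - 1), hg1, one_pow]
        ring
      · rw [if_neg hkm2]
        rw [coeff_pow_zero_of_lt g hg0 (k - 1) (m - 1) (by omega)]
        ring
  rw [hsum, Finset.sum_add_distrib, Finset.sum_ite_eq' (Finset.range (m + p - 1 + 1)) m
    (fun _ => (m : ℂ) * coeff m h * c)]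
  rw [if_pos (by rw [Finset.mem_range]; omega)]

end Stmt12Aux

end StmtTwelveAux

open MvPowerSeries in
/-- Remark 2.3. A nonconstant holomorphic curve admits a formal
reparametrization with some nonconvergent component. -/
theorem stmt_12 (N : ℕ) (A : Fin N → MvPowerSeries Unit ℂ)
    (hconv : ∀ j, IsConvergentPS (A j))
    (hA0 : ∀ j, constantCoeff (A j) = 0)
    (hA : A ≠ 0) :
    ∃ f : MvPowerSeries Unit ℂ, constantCoeff f = 0 ∧
      ∃ j, ¬ IsConvergentPS (substPS (fun _ : Unit => f) (A j)) := by
  classical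
  open Stmt12Aux in
  obtain ⟨j, hj⟩ : ∃ j, A j ≠ 0 := Function.ne_iff.1 hA
  set h : PowerSeries ℂ := A j with hh
  have hex : ∃ k, PowerSeries.coeff k h ≠ 0 := by
    by_contra hc
    push_neg at hc
    exact hj (PowerSeries.ext fun k => by rw [hc k, map_zero])
  set m : ℕ := Nat.find hex with hmdef
  have ham : PowerSeries.coeff m h ≠ 0 := Nat.find_spec hex
  have hmin : ∀ i < m, PowerSeries.coeff i h = 0 := by
    intro i hi
    by_contra hc
    exact Nat.find_min hex hi hc
  have hm1 : 1 ≤ m := by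
    rcases Nat.eq_zero_or_pos m with h0 | h0
    · exfalso
      apply ham
      rw [h0, PowerSeries.coeff_zero_eq_constantCoeff]
      exact hA0 j
    · exact h0
  have hslope : (m : ℂ) * PowerSeries.coeff m h ≠ 0 :=
    mul_ne_zero (Nat.cast_ne_zero.2 (by omega)) ham
  -- recursive construction
  set step : ℕ → PowerSeries ℂ → PowerSeries ℂ := fun n gn =>
    gn + PowerSeries.C
      (((((n + 2 : ℕ)) : ℂ) ^ (n + 2) -
          MvPowerSeries.coeff (Finsupp.single () (m + n + 1))
            (substPS (fun _ : Unit => gn) h)) /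
        ((m : ℂ) * PowerSeries.coeff m h)) * PowerSeries.X ^ (n + 2) with hstepdef
  set G : ℕ → PowerSeries ℂ := fun n => Nat.rec PowerSeries.X step n with hGdef
  have hG0 : G 0 = PowerSeries.X := rfl
  have hGs : ∀ n, G (n + 1) = step n (G n) := fun n => rfl
  have hXpow : ∀ p : ℕ, 1 ≤ p →
      PowerSeries.constantCoeff ((PowerSeries.X : PowerSeries ℂ) ^ p) = 0 := by
    intro p hp
    rw [← PowerSeries.coeff_zero_eq_constantCoeff, PowerSeries.coeff_X_pow, if_neg (by omega)]
  have hconst : ∀ n, PowerSeries.constantCoeff (G n) = 0 := by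
    intro n
    induction n with
    | zero => rw [hG0]; exact PowerSeries.constantCoeff_X
    | succ n ih =>
        rw [hGs n, hstepdef]
        simp only [map_add, map_mul, ih, PowerSeries.constantCoeff_C, hXpow (n + 2) (by omega),
          mul_zero, add_zero, zero_add]
  have hcoeff1 : ∀ n, PowerSeries.coeff 1 (G n) = 1 := by
    intro n
    induction n with
    | zero => rw [hG0]; simp
    | succ n ih =>
        rw [hGs n, hstepdef]
        simp only [map_add, PowerSeries.coeff_C_mul, PowerSeries.coeff_X_pow,
          if_neg (by omega : ¬ (1 = n + 2)), mul_zero, add_zero, ih]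
  have hstab : ∀ n, ∀ i ≤ n + 1, PowerSeries.coeff i (G (n + 1)) = PowerSeries.coeff i (G n) := by
    intro n i hi
    rw [hGs n, hstepdef]
    simp only [map_add, PowerSeries.coeff_C_mul, PowerSeries.coeff_X_pow,
      if_neg (by omega : ¬ (i = n + 2)), mul_zero, add_zero]
  have hstab' : ∀ n n', n ≤ n' → ∀ i ≤ n + 1,
      PowerSeries.coeff i (G n') = PowerSeries.coeff i (G n) := by
    intro n n' hn
    induction n' with
    | zero =>
        intro i hi
        have : n = 0 := by omega
        rw [this]
    | succ n' ih =>
        intro i hi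
        rcases Nat.lt_or_ge n (n' + 1) with hlt | hge
        · rw [hstab n' i (by omega)]
          exact ih (by omega) i hi
        · have : n = n' + 1 := by omega
          rw [this]
  set f : PowerSeries ℂ := PowerSeries.mk (fun i => PowerSeries.coeff i (G i)) with hfdef
  have hf : ∀ i, PowerSeries.coeff i f = PowerSeries.coeff i (G i) := fun i =>
    PowerSeries.coeff_mk i _
  have hfagree : ∀ n, ∀ i ≤ n + 1, PowerSeries.coeff i f = PowerSeries.coeff i (G n) := by
    intro n i hi
    rw [hf i]
    rcases le_or_gt i n with hle | hlt
    · exact (hstab' i n hle i (by omega)).symm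
    · have : i = n + 1 := by omega
      rw [this, hstab n (n + 1) (le_refl _), ← this]
  have hfconst : PowerSeries.constantCoeff f = 0 := by
    rw [← PowerSeries.coeff_zero_eq_constantCoeff, hfagree 0 0 (by omega), hG0]
    simp
  -- the chosen-value property
  have hval : ∀ n, MvPowerSeries.coeff (Finsupp.single () (m + n + 1))
      (substPS (fun _ : Unit => G (n + 1)) h) = (((n + 2 : ℕ)) : ℂ) ^ (n + 2) := by
    intro n
    have hk := key h (G n) m (n + 2) hm1 (by omega) hmin (hconst n) (hcoeff1 n)
      (((((n + 2 : ℕ)) : ℂ) ^ (n + 2) -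
          MvPowerSeries.coeff (Finsupp.single () (m + n + 1))
            (substPS (fun _ : Unit => G n) h)) /
        ((m : ℂ) * PowerSeries.coeff m h))
    have hidx : m + (n + 2) - 1 = m + n + 1 := by omega
    rw [hidx] at hk
    rw [hGs n, hstepdef, hk]
    field_simp
    rw [mul_div_cancel_left₀ _ (Nat.cast_ne_zero.2 (by omega) : (m : ℂ) ≠ 0)]; ring
  -- main coefficient computation for f
  have hmain : ∀ n, MvPowerSeries.coeff (Finsupp.single () (m + n + 1))
      (substPS (fun _ : Unit => f) h) = (((n + 2 : ℕ)) : ℂ) ^ (n + 2) := by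
    intro n
    rw [← hval n, substPS_coeff, substPS_coeff]
    simp only [Finsupp.single_eq_same]
    apply Finset.sum_congr rfl
    intro k hk
    rcases Nat.lt_or_ge k m with hkm | hkm
    · rw [hmin k hkm, zero_mul, zero_mul]
    · congr 1
      apply coeff_pow_congr f (G (n + 1)) hfconst (hconst (n + 1)) (n + 2)
        (fun i hi => hfagree (n + 1) i hi) k (m + n + 1) (by omega)
  -- nonconvergence
  refine ⟨f, hfconst, j, ?_⟩
  rintro ⟨C, r, hr, hb⟩
  have hnorm : ∀ n : ℕ, ((n + 2 : ℕ) : ℝ) ^ (n + 2) ≤ C * r ^ (m + n + 1) := by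
    intro n
    have hd := hb (Finsupp.single () (m + n + 1))
    rw [finsupp_sum_unit, Finsupp.single_eq_same] at hd
    rw [hmain n] at hd
    rw [norm_pow, Complex.norm_natCast] at hd
    exact hd
  set R : ℝ := max r 1 with hRdef
  have hR1 : (1 : ℝ) ≤ R := le_max_right r 1
  have hrR : r ≤ R := le_max_left r 1
  have hR0 : (0 : ℝ) < R := by linarith
  obtain ⟨n0, hn0⟩ := exists_nat_gt (max (C * R ^ m) R)
  set n : ℕ := n0 with hndef
  have hq : ((n + 2 : ℕ) : ℝ) > max (C * R ^ m) R := by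
    refine lt_of_lt_of_le hn0 ?_
    push_cast
    linarith
  set q : ℝ := ((n + 2 : ℕ) : ℝ) with hqdef
  have hq1 : C * R ^ m < q := lt_of_le_of_lt (le_max_left _ _) hq
  have hq2 : R < q := lt_of_le_of_lt (le_max_right _ _) hq
  have hqpos : 0 < q := lt_trans hR0 hq2
  have hbound := hnorm n
  rcases le_or_gt 0 C with hC | hC
  · have h1 : C * r ^ (m + n + 1) ≤ C * R ^ (m + n + 1) :=
      mul_le_mul_of_nonneg_left (pow_le_pow_left₀ hr.le hrR _) hC
    have h2 : C * R ^ (m + n + 1) = (C * R ^ m) * R ^ (n + 1) := by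
      rw [show m + n + 1 = m + (n + 1) by omega, pow_add]
      ring
    have h3 : (C * R ^ m) * R ^ (n + 1) < q * R ^ (n + 1) :=
      mul_lt_mul_of_pos_right hq1 (pow_pos hR0 _)
    have h4 : q * R ^ (n + 1) ≤ q * q ^ (n + 1) :=
      mul_le_mul_of_nonneg_left (pow_le_pow_left₀ hR0.le hq2.le _) hqpos.le
    have h5 : q * q ^ (n + 1) = q ^ (n + 2) := by
      rw [pow_succ]
      ring
    have h6 : ((n + 2 : ℕ) : ℝ) ^ (n + 2) = q ^ (n + 2) := rfl
    rw [h6] at hbound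
    linarith
  · have h1 : C * r ^ (m + n + 1) < 0 :=
      mul_neg_of_neg_of_pos hC (pow_pos hr _)
    have h2 : (0 : ℝ) < ((n + 2 : ℕ) : ℝ) ^ (n + 2) := pow_pos (by positivity) _
    linarith
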